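/- For all indices 1 ≤ i, j ≤ ℓ with i ≠ j, the difference operators satisfy the Yangian mixed lowering relation: (u − v)·[F_i(u), F_j(v)] = (iħ/2)·d_i·a_{ij}·(F_i(u)∘(F_j(u) − F_j(v)) + (F_j(u) − F_j(v))∘F_i(u)) − (F_i^{(0)}∘(F_j(u) − F_j(v)) − (F_j(u) − F_j(v))∘F_i^{(0)}), as an identity of ℂ(u,v)-linear endomorphisms of F, where [A,B] := A∘B − B∘A. -/

import Mathlib

open MvPolynomial Complex Finset

noncomputable section

/-- Variables: the spectral variables (indexed by `Fin 2`) and the `γ_{i,k}`. -/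
abbrev Var (ℓ : ℕ) (m : Fin ℓ → ℕ) := Fin 2 ⊕ ((i : Fin ℓ) × Fin (m i))

/-- The field of rational functions over `ℂ` in the spectral variables and the `γ_{i,k}`. -/
abbrev FF (ℓ : ℕ) (m : Fin ℓ → ℕ) := FractionRing (MvPolynomial (Var ℓ m) ℂ)

variable (ℓ : ℕ) (m : Fin ℓ → ℕ)

/-- The embedding of constants `ℂ → F`. -/
def cstHom : ℂ →+* FF ℓ m :=
  (algebraMap (MvPolynomial (Var ℓ m) ℂ) (FF ℓ m)).comp (C : ℂ →+* MvPolynomial (Var ℓ m) ℂ)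

def cst (c : ℂ) : FF ℓ m := cstHom ℓ m c

/-- The variable `γ_{i,k}` as an element of `F`. -/
def gam (i : Fin ℓ) (k : Fin (m i)) : FF ℓ m :=
  algebraMap (MvPolynomial (Var ℓ m) ℂ) (FF ℓ m) (X (Sum.inr ⟨i, k⟩))

/-- The spectral variables. -/
def spec (t : Fin 2) : FF ℓ m :=
  algebraMap (MvPolynomial (Var ℓ m) ℂ) (FF ℓ m) (X (Sum.inl t))

/-- The algebra automorphism of the polynomial ring shifting the variable `w` by `c`
and fixing all other variables. -/
def shiftPoly (c : ℂ) (w : Var ℓ m) :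
    MvPolynomial (Var ℓ m) ℂ ≃ₐ[ℂ] MvPolynomial (Var ℓ m) ℂ :=
  AlgEquiv.ofAlgHom
    (aeval (fun j => if j = w then X j + MvPolynomial.C c else X j))
    (aeval (fun j => if j = w then X j - MvPolynomial.C c else X j))
    (by apply MvPolynomial.algHom_ext; intro j; by_cases h : j = w <;> simp [h])
    (by apply MvPolynomial.algHom_ext; intro j; by_cases h : j = w <;> simp [h])

/-- The induced automorphism of the field of rational functions. -/
def shiftField (c : ℂ) (w : Var ℓ m) : FF ℓ m ≃+* FF ℓ m :=
  IsFractionRing.ringEquivOfRingEquiv (shiftPoly ℓ m c w).toRingEquiv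

variable (a : Fin ℓ → Fin ℓ → ℤ) (d : Fin ℓ → ℕ) (hb : ℂ)

/-- `β_{i,k}` : the automorphism `γ_{i,k} ↦ γ_{i,k} + iħ·d_i`. -/
def beta (i : Fin ℓ) (k : Fin (m i)) : FF ℓ m ≃+* FF ℓ m :=
  shiftField ℓ m (I * hb * (d i : ℂ)) (Sum.inr ⟨i, k⟩)

/-- The constant `(iħ/2)·(d_i·a_{ij} + 2r·d_j)`, where `r` is offset by one
(so that `r` ranges over `0, …, −a_{ji} − 1` in `Finset.range`). -/
def cf (i j : Fin ℓ) (r : ℕ) : ℂ :=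
  (I * hb / 2) * ((d i : ℂ) * (a i j : ℂ) + 2 * ((r : ℂ) + 1) * (d j : ℂ))

variable (l : Fin ℓ → ℕ) (ν : (i : Fin ℓ) → Fin (l i) → ℂ)

/-- `R_i(x) = Π_{t=1}^{l_i} (x − ν_{i,t})`, evaluated at `x ∈ F`. -/
def Rv (i : Fin ℓ) (x : FF ℓ m) : FF ℓ m :=
  ∏ t : Fin (l i), (x - cst ℓ m (ν i t))

/-- The operator `F_i(w)`. -/
def Fop (i : Fin ℓ) (w : FF ℓ m) : FF ℓ m → FF ℓ m := fun f =>
  cst ℓ m (-((d i : ℂ) ^ (-(1/2 : ℂ)))) *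
    ∑ k : Fin (m i),
      (Rv ℓ m l ν i (gam ℓ m i k + cst ℓ m (I * hb * (d i : ℂ))) *
        (∏ j ∈ univ.filter (fun j => j < i), ∏ r ∈ range (-(a j i)).toNat, ∏ p : Fin (m j),
          (gam ℓ m i k - gam ℓ m j p - cst ℓ m (cf ℓ a d hb i j r)
            + cst ℓ m (I * hb * (d i : ℂ)))) /
        ((w - gam ℓ m i k - cst ℓ m (I * hb * (d i : ℂ))) *
          ∏ p ∈ univ.erase k, (gam ℓ m i k - gam ℓ m i p))) *
      (beta ℓ m d hb i k) f

/-- The zero mode `F_i^{(0)}`. -/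
def F0op (i : Fin ℓ) : FF ℓ m → FF ℓ m := fun f =>
  cst ℓ m (-((d i : ℂ) ^ (-(1/2 : ℂ)))) *
    ∑ k : Fin (m i),
      (Rv ℓ m l ν i (gam ℓ m i k + cst ℓ m (I * hb * (d i : ℂ))) *
        (∏ j ∈ univ.filter (fun j => j < i), ∏ r ∈ range (-(a j i)).toNat, ∏ p : Fin (m j),
          (gam ℓ m i k - gam ℓ m j p - cst ℓ m (cf ℓ a d hb i j r)
            + cst ℓ m (I * hb * (d i : ℂ)))) /
        (∏ p ∈ univ.erase k, (gam ℓ m i k - gam ℓ m i p))) *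
      (beta ℓ m d hb i k) f

section Aux

variable {ℓ : ℕ} {m : Fin ℓ → ℕ}

lemma shiftPoly_apply (c : ℂ) (w : Var ℓ m) (p : MvPolynomial (Var ℓ m) ℂ) :
    shiftPoly ℓ m c w p =
      aeval (fun j => if j = w then X j + MvPolynomial.C c else X j) p := rfl

lemma shiftPoly_X (c : ℂ) (w j : Var ℓ m) :
    shiftPoly ℓ m c w (X j) = if j = w then X j + MvPolynomial.C c else X j := by
  rw [shiftPoly_apply, aeval_X]

lemma shiftField_algebraMap (c : ℂ) (w : Var ℓ m) (p : MvPolynomial (Var ℓ m) ℂ) :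
    shiftField ℓ m c w (algebraMap (MvPolynomial (Var ℓ m) ℂ) (FF ℓ m) p)
      = algebraMap (MvPolynomial (Var ℓ m) ℂ) (FF ℓ m) (shiftPoly ℓ m c w p) :=
  IsFractionRing.ringEquivOfRingEquiv_algebraMap _ p

variable {d : Fin ℓ → ℕ} {hb : ℂ}

lemma beta_algebraMap (i : Fin ℓ) (k : Fin (m i)) (p : MvPolynomial (Var ℓ m) ℂ) :
    beta ℓ m d hb i k (algebraMap (MvPolynomial (Var ℓ m) ℂ) (FF ℓ m) p)
      = algebraMap (MvPolynomial (Var ℓ m) ℂ) (FF ℓ m)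
          (shiftPoly ℓ m (I * hb * (d i : ℂ)) (Sum.inr ⟨i, k⟩) p) :=
  shiftField_algebraMap _ _ p

lemma beta_cst (i : Fin ℓ) (k : Fin (m i)) (c : ℂ) :
    beta ℓ m d hb i k (cst ℓ m c) = cst ℓ m c := by
  rw [cst, cstHom, RingHom.comp_apply, beta_algebraMap]
  congr 1
  rw [shiftPoly_apply, aeval_C]
  rfl

lemma beta_spec (i : Fin ℓ) (k : Fin (m i)) (t : Fin 2) :
    beta ℓ m d hb i k (spec ℓ m t) = spec ℓ m t := by
  rw [spec, beta_algebraMap]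
  congr 1
  rw [shiftPoly_X, if_neg (by simp)]

lemma beta_gam_self (i : Fin ℓ) (k : Fin (m i)) :
    beta ℓ m d hb i k (gam ℓ m i k) = gam ℓ m i k + cst ℓ m (I * hb * (d i : ℂ)) := by
  rw [gam, beta_algebraMap, shiftPoly_X, if_pos rfl, (algebraMap (MvPolynomial (Var ℓ m) ℂ) (FF ℓ m)).map_add]
  rfl

lemma beta_gam_ne {i j : Fin ℓ} (k : Fin (m i)) (p : Fin (m j)) (h : j ≠ i) :
    beta ℓ m d hb i k (gam ℓ m j p) = gam ℓ m j p := by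
  rw [gam, beta_algebraMap, shiftPoly_X, if_neg (by simp [h])]

lemma beta_gam_ne' {i : Fin ℓ} (k : Fin (m i)) {p : Fin (m i)} (h : p ≠ k) :
    beta ℓ m d hb i k (gam ℓ m i p) = gam ℓ m i p := by
  rw [gam, beta_algebraMap, shiftPoly_X, if_neg (by simp [h])]

end Aux
section Aux2

variable {ℓ : ℕ} {m : Fin ℓ → ℕ} {d : Fin ℓ → ℕ} {hb : ℂ}

lemma shiftPoly_C (c c' : ℂ) (w : Var ℓ m) :
    shiftPoly ℓ m c w (MvPolynomial.C c') = MvPolynomial.C c' := by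
  rw [shiftPoly_apply, aeval_C]; rfl

lemma shiftPoly_comm {c c' : ℂ} {w w' : Var ℓ m} (h : w ≠ w') (p : MvPolynomial (Var ℓ m) ℂ) :
    shiftPoly ℓ m c w (shiftPoly ℓ m c' w' p) = shiftPoly ℓ m c' w' (shiftPoly ℓ m c w p) := by
  have : ((shiftPoly ℓ m c w).toAlgHom.comp (shiftPoly ℓ m c' w').toAlgHom)
      = ((shiftPoly ℓ m c' w').toAlgHom.comp (shiftPoly ℓ m c w).toAlgHom) := by
    apply MvPolynomial.algHom_ext
    intro j
    simp only [AlgHom.comp_apply, AlgEquiv.toAlgHom_eq_coe, AlgHom.coe_coe]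
    show shiftPoly ℓ m c w (shiftPoly ℓ m c' w' (X j)) = shiftPoly ℓ m c' w' (shiftPoly ℓ m c w (X j))
    rw [shiftPoly_X, shiftPoly_X]
    by_cases h1 : j = w <;> by_cases h2 : j = w' <;>
      simp_all [shiftPoly_X, shiftPoly_C, map_add, apply_ite (shiftPoly ℓ m c w),
        apply_ite (shiftPoly ℓ m c' w')]
  exact DFunLike.congr_fun this p

lemma beta_comm {i j : Fin ℓ} (k : Fin (m i)) (p : Fin (m j)) (h : i ≠ j) (f : FF ℓ m) :
    beta ℓ m d hb i k (beta ℓ m d hb j p f) = beta ℓ m d hb j p (beta ℓ m d hb i k f) := by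
  have : ((beta ℓ m d hb i k : FF ℓ m →+* FF ℓ m).comp (beta ℓ m d hb j p : FF ℓ m →+* FF ℓ m))
      = ((beta ℓ m d hb j p : FF ℓ m →+* FF ℓ m).comp (beta ℓ m d hb i k : FF ℓ m →+* FF ℓ m)) := by
    apply IsLocalization.ringHom_ext (nonZeroDivisors (MvPolynomial (Var ℓ m) ℂ))
    refine RingHom.ext fun q => ?_
    simp only [RingHom.comp_apply, RingEquiv.coe_toRingHom]
    rw [beta_algebraMap, beta_algebraMap, beta_algebraMap, beta_algebraMap,
      shiftPoly_comm (by simp [h]) q]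
  exact DFunLike.congr_fun this f

lemma algebraMap_ne_zero {p : MvPolynomial (Var ℓ m) ℂ} (h : p ≠ 0) :
    algebraMap (MvPolynomial (Var ℓ m) ℂ) (FF ℓ m) p ≠ 0 := by
  rw [Ne, map_eq_zero_iff _ (IsFractionRing.injective (MvPolynomial (Var ℓ m) ℂ) (FF ℓ m))]
  exact h

lemma XXC_ne {w1 w2 : Var ℓ m} (h : w1 ≠ w2) (c : ℂ) :
    (X w1 - X w2 - MvPolynomial.C c : MvPolynomial (Var ℓ m) ℂ) ≠ 0 := by
  intro hc
  have := congrArg (aeval (fun w => if w = w1 then c + 1 else 0 : Var ℓ m → ℂ)) hc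
  simp [Ne.symm h] at this

lemma XC_ne (w1 : Var ℓ m) (c : ℂ) :
    (X w1 - MvPolynomial.C c : MvPolynomial (Var ℓ m) ℂ) ≠ 0 := by
  intro hc
  have := congrArg (aeval (fun w => if w = w1 then c + 1 else 0 : Var ℓ m → ℂ)) hc
  simp at this

lemma sub_cst_ne {w1 w2 : Var ℓ m} (h : w1 ≠ w2) (c : ℂ) :
    algebraMap (MvPolynomial (Var ℓ m) ℂ) (FF ℓ m) (X w1)
      - algebraMap (MvPolynomial (Var ℓ m) ℂ) (FF ℓ m) (X w2) - cst ℓ m c ≠ 0 := by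
  rw [cst, cstHom, RingHom.comp_apply, ← map_sub, ← map_sub]
  exact algebraMap_ne_zero (XXC_ne h c)

end Aux2
section Key
variable {K : Type*} [Field K]

lemma key1core (u v x y ci cj κ nA nB nB' : K)
    (h1 : (y - x + cj - ci - κ) * nB' = (y - x + cj - ci + κ) * nB)
    (hux : u - x - ci ≠ 0)
    (huy : u - y - cj ≠ 0) (hvy : v - y - cj ≠ 0) :
    (u - v) * (nA / (u - x - ci) * (nB' / (v - y - cj))
        - nB / (v - y - cj) * (nA / (u - x - ci)))
      = κ * (nA / (u - x - ci) * (nB' / (u - y - cj) - nB' / (v - y - cj))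
          + (nB / (u - y - cj) - nB / (v - y - cj)) * (nA / (u - x - ci)))
        - (nA * (nB' / (u - y - cj) - nB' / (v - y - cj))
          - (nB / (u - y - cj) - nB / (v - y - cj)) * nA) := by
  have hD : (u - y - cj) * (v - y - cj) ≠ 0 := mul_ne_zero huy hvy
  have hs : ∀ nn : K, nn / (u - y - cj) - nn / (v - y - cj)
      = (nn * (v - u)) / ((u - y - cj) * (v - y - cj)) := by
    intro nn
    rw [div_sub_div _ _ huy hvy]
    congr 1
    ring
  rw [hs, hs]
  have e1 : (u - v) * (nA / (u - x - ci) * (nB' / (v - y - cj))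
      - nB / (v - y - cj) * (nA / (u - x - ci)))
      = ((u - v) * (nA * (nB' - nB))) / ((u - x - ci) * (v - y - cj)) := by
    rw [div_mul_div_comm, div_mul_div_comm, mul_comm (v - y - cj) (u - x - ci),
      div_sub_div_same, mul_div_assoc]
    congr 1
    ring
  have t1 : κ * (nA / (u - x - ci) * (nB' * (v - u) / ((u - y - cj) * (v - y - cj)))
      + nB * (v - u) / ((u - y - cj) * (v - y - cj)) * (nA / (u - x - ci)))
      = (κ * (nA * (nB' + nB) * (v - u)))
          / ((u - x - ci) * ((u - y - cj) * (v - y - cj))) := by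
    rw [div_mul_div_comm, div_mul_div_comm,
      mul_comm ((u - y - cj) * (v - y - cj)) (u - x - ci), ← add_div,
      mul_div_assoc']
    congr 1
    ring
  have t2 : nA * (nB' * (v - u) / ((u - y - cj) * (v - y - cj)))
      - nB * (v - u) / ((u - y - cj) * (v - y - cj)) * nA
      = (nA * (nB' - nB) * (v - u)) / ((u - y - cj) * (v - y - cj)) := by
    rw [mul_div_assoc', div_mul_eq_mul_div, div_sub_div_same]
    congr 1
    ring
  rw [e1, t1, t2,
    ← mul_div_mul_left (nA * (nB' - nB) * (v - u)) ((u - y - cj) * (v - y - cj)) hux,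
    div_sub_div_same, div_eq_div_iff (mul_ne_zero hux hvy) (mul_ne_zero hux hD)]
  linear_combination (-((u - v) * ((u - x - ci) * (v - y - cj)) * nA)) * h1
end Key
section Key2
variable {K : Type*} [Field K]

lemma key2core (u v x y ci cj κ nA nA' nB : K)
    (h1 : (y - x + cj - ci + κ) * nA' = (y - x + cj - ci - κ) * nA)
    (hux : u - x - ci ≠ 0)
    (huy : u - y - cj ≠ 0) (hvy : v - y - cj ≠ 0) :
    (u - v) * (nA / (u - x - ci) * (nB / (v - y - cj))
        - nB / (v - y - cj) * (nA' / (u - x - ci)))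
      = κ * (nA / (u - x - ci) * (nB / (u - y - cj) - nB / (v - y - cj))
          + (nB / (u - y - cj) - nB / (v - y - cj)) * (nA' / (u - x - ci)))
        - (nA * (nB / (u - y - cj) - nB / (v - y - cj))
          - (nB / (u - y - cj) - nB / (v - y - cj)) * nA') := by
  have hD : (u - y - cj) * (v - y - cj) ≠ 0 := mul_ne_zero huy hvy
  have hs : ∀ nn : K, nn / (u - y - cj) - nn / (v - y - cj)
      = (nn * (v - u)) / ((u - y - cj) * (v - y - cj)) := by
    intro nn
    rw [div_sub_div _ _ huy hvy]
    congr 1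
    ring
  rw [hs]
  have e1 : (u - v) * (nA / (u - x - ci) * (nB / (v - y - cj))
      - nB / (v - y - cj) * (nA' / (u - x - ci)))
      = ((u - v) * ((nA - nA') * nB)) / ((u - x - ci) * (v - y - cj)) := by
    rw [div_mul_div_comm, div_mul_div_comm, mul_comm (v - y - cj) (u - x - ci),
      div_sub_div_same, mul_div_assoc]
    congr 1
    ring
  have t1 : κ * (nA / (u - x - ci) * (nB * (v - u) / ((u - y - cj) * (v - y - cj)))
      + nB * (v - u) / ((u - y - cj) * (v - y - cj)) * (nA' / (u - x - ci)))
      = (κ * ((nA + nA') * nB * (v - u)))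
          / ((u - x - ci) * ((u - y - cj) * (v - y - cj))) := by
    rw [div_mul_div_comm, div_mul_div_comm,
      mul_comm ((u - y - cj) * (v - y - cj)) (u - x - ci), ← add_div,
      mul_div_assoc']
    congr 1
    ring
  have t2 : nA * (nB * (v - u) / ((u - y - cj) * (v - y - cj)))
      - nB * (v - u) / ((u - y - cj) * (v - y - cj)) * nA'
      = ((nA - nA') * nB * (v - u)) / ((u - y - cj) * (v - y - cj)) := by
    rw [mul_div_assoc', div_mul_eq_mul_div, div_sub_div_same]
    congr 1
    ring
  rw [e1, t1, t2,
    ← mul_div_mul_left ((nA - nA') * nB * (v - u)) ((u - y - cj) * (v - y - cj)) hux,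
    div_sub_div_same, div_eq_div_iff (mul_ne_zero hux hvy) (mul_ne_zero hux hD)]
  linear_combination ((u - v) * ((u - x - ci) * (v - y - cj)) * nB) * h1
end Key2
section Coef

variable {ℓ : ℕ} {m : Fin ℓ → ℕ} (a : Fin ℓ → Fin ℓ → ℤ) (d : Fin ℓ → ℕ) (hb : ℂ)
  (l : Fin ℓ → ℕ) (ν : (i : Fin ℓ) → Fin (l i) → ℂ)

lemma cst_add (c1 c2 : ℂ) : cst ℓ m (c1 + c2) = cst ℓ m c1 + cst ℓ m c2 :=
  map_add (cstHom ℓ m) c1 c2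

/-- The numerator of the `k`-th coefficient of `F_i(w)`. -/
def coefN (i : Fin ℓ) (k : Fin (m i)) : FF ℓ m :=
  Rv ℓ m l ν i (gam ℓ m i k + cst ℓ m (I * hb * (d i : ℂ))) *
    ∏ j ∈ univ.filter (fun j => j < i), ∏ r ∈ range (-(a j i)).toNat, ∏ p : Fin (m j),
      (gam ℓ m i k - gam ℓ m j p - cst ℓ m (cf ℓ a d hb i j r)
        + cst ℓ m (I * hb * (d i : ℂ)))

/-- The denominator product of the `k`-th coefficient. -/
def denP (i : Fin ℓ) (k : Fin (m i)) : FF ℓ m :=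
  ∏ p ∈ univ.erase k, (gam ℓ m i k - gam ℓ m i p)

lemma Fop_apply (i : Fin ℓ) (w : FF ℓ m) (f : FF ℓ m) :
    Fop ℓ m a d hb l ν i w f = ∑ k : Fin (m i),
      cst ℓ m (-((d i : ℂ) ^ (-(1/2 : ℂ)))) *
        (coefN a d hb l ν i k /
          ((w - gam ℓ m i k - cst ℓ m (I * hb * (d i : ℂ))) * denP i k)) *
        beta ℓ m d hb i k f := by
  rw [Fop, Finset.mul_sum]
  exact Finset.sum_congr rfl fun k _ => (mul_assoc _ _ _).symm

lemma F0op_apply (i : Fin ℓ) (f : FF ℓ m) :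
    F0op ℓ m a d hb l ν i f = ∑ k : Fin (m i),
      cst ℓ m (-((d i : ℂ) ^ (-(1/2 : ℂ)))) *
        (coefN a d hb l ν i k / denP i k) *
        beta ℓ m d hb i k f := by
  rw [F0op, Finset.mul_sum]
  exact Finset.sum_congr rfl fun k _ => (mul_assoc _ _ _).symm

lemma Fop_sub (i : Fin ℓ) (w : FF ℓ m) (f g : FF ℓ m) :
    Fop ℓ m a d hb l ν i w (f - g)
      = Fop ℓ m a d hb l ν i w f - Fop ℓ m a d hb l ν i w g := by
  simp only [Fop, map_sub, mul_sub, Finset.sum_sub_distrib]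

lemma F0op_sub (i : Fin ℓ) (f g : FF ℓ m) :
    F0op ℓ m a d hb l ν i (f - g)
      = F0op ℓ m a d hb l ν i f - F0op ℓ m a d hb l ν i g := by
  simp only [F0op, map_sub, mul_sub, Finset.sum_sub_distrib]

variable {i j : Fin ℓ} (k : Fin (m i)) (p : Fin (m j))

lemma beta_Rv (hij : i ≠ j) (c : ℂ) :
    beta ℓ m d hb j p (Rv ℓ m l ν i (gam ℓ m i k + cst ℓ m c))
      = Rv ℓ m l ν i (gam ℓ m i k + cst ℓ m c) := by
  rw [Rv, map_prod]
  exact Finset.prod_congr rfl fun t _ => by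
    rw [map_sub, map_add, beta_gam_ne _ _ hij, beta_cst, beta_cst]

lemma beta_denP (hij : i ≠ j) :
    beta ℓ m d hb j p (denP i k) = denP i k := by
  rw [denP, map_prod]
  exact Finset.prod_congr rfl fun t _ => by
    rw [map_sub, beta_gam_ne _ _ hij, beta_gam_ne _ _ hij]

/-- `β_{j,p}` fixes `coefN i k` when `¬ j < i` (and `j ≠ i`). -/
lemma beta_coefN_fix (hne : j ≠ i) (hlt : ¬ j < i) :
    beta ℓ m d hb j p (coefN a d hb l ν i k) = coefN a d hb l ν i k := by
  rw [coefN, map_mul, beta_Rv d hb l ν k p (Ne.symm hne), map_prod]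
  congr 1
  refine Finset.prod_congr rfl fun j' hj' => ?_
  have hj'i : j' < i := by simpa using hj'
  have hj'j : j' ≠ j := fun h => hlt (h ▸ hj'i)
  rw [map_prod]
  refine Finset.prod_congr rfl fun r _ => ?_
  rw [map_prod]
  refine Finset.prod_congr rfl fun p' _ => ?_
  rw [map_add, map_sub, map_sub, beta_gam_ne _ _ (Ne.symm hne),
    beta_gam_ne _ _ hj'j, beta_cst, beta_cst]

end Coef
section Tele

variable {ℓ : ℕ} {m : Fin ℓ → ℕ} (a : Fin ℓ → Fin ℓ → ℤ) (d : Fin ℓ → ℕ) (hb : ℂ)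
  (l : Fin ℓ → ℕ) (ν : (i : Fin ℓ) → Fin (l i) → ℂ)

lemma cst_neg {ℓ' : ℕ} {m' : Fin ℓ' → ℕ} (c : ℂ) : cst ℓ' m' (-c) = -cst ℓ' m' c :=
  map_neg (cstHom ℓ' m') c

set_option maxHeartbeats 1600000 in
/-- Telescoping: action of `β_{j,p}` on `coefN i k` for `j < i`. -/
lemma beta_coefN_tele {i j : Fin ℓ} (k : Fin (m i)) (p : Fin (m j))
    (ha' : ∀ i j, i ≠ j → a i j ≤ 0)
    (hsym : ∀ i j, (d i : ℤ) * a i j = (d j : ℤ) * a j i)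
    (hlt : j < i) :
    (gam ℓ m i k - gam ℓ m j p + cst ℓ m (I * hb * (d i : ℂ))
        - cst ℓ m (I * hb * (d j : ℂ))
        - cst ℓ m ((I * hb / 2) * ((d i : ℂ) * (a i j : ℂ))))
      * beta ℓ m d hb j p (coefN a d hb l ν i k)
    = (gam ℓ m i k - gam ℓ m j p + cst ℓ m (I * hb * (d i : ℂ))
        - cst ℓ m (I * hb * (d j : ℂ))
        + cst ℓ m ((I * hb / 2) * ((d i : ℂ) * (a i j : ℂ))))
      * coefN a d hb l ν i k := by
  have hne : j ≠ i := Fin.ne_of_lt hlt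
  have hne' : i ≠ j := Ne.symm hne
  -- the sliding factor
  set Ffun : ℕ → FF ℓ m := fun r =>
    gam ℓ m i k - gam ℓ m j p - cst ℓ m (cf ℓ a d hb i j r)
      + cst ℓ m (I * hb * (d i : ℂ)) with hFfun
  set R : ℕ := (-(a j i)).toNat with hR
  -- decomposition of the big product
  have hjmem : j ∈ univ.filter (fun j' => j' < i) := by simp [hlt]
  set G : FF ℓ m := ∏ r ∈ range R, ∏ p' ∈ univ.erase p,
    (gam ℓ m i k - gam ℓ m j p' - cst ℓ m (cf ℓ a d hb i j r)
      + cst ℓ m (I * hb * (d i : ℂ))) with hG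
  set Rest : FF ℓ m := ∏ j' ∈ (univ.filter (fun j' => j' < i)).erase j,
    ∏ r ∈ range (-(a j' i)).toNat, ∏ p' : Fin (m j'),
      (gam ℓ m i k - gam ℓ m j' p' - cst ℓ m (cf ℓ a d hb i j' r)
        + cst ℓ m (I * hb * (d i : ℂ))) with hRest
  have hsplit : coefN a d hb l ν i k
      = Rv ℓ m l ν i (gam ℓ m i k + cst ℓ m (I * hb * (d i : ℂ)))
        * ((∏ r ∈ range R, Ffun r) * (G * Rest)) := by
    rw [coefN, ← Finset.mul_prod_erase _ _ hjmem, ← hRest]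
    congr 1
    rw [← mul_assoc, ← Finset.prod_mul_distrib]
    congr 1
    refine Finset.prod_congr rfl fun r _ => ?_
    rw [hFfun, ← Finset.mul_prod_erase _ _ (Finset.mem_univ p)]
  -- β fixes G and Rest
  have hGfix : beta ℓ m d hb j p G = G := by
    rw [hG, map_prod]
    refine Finset.prod_congr rfl fun r _ => ?_
    rw [map_prod]
    refine Finset.prod_congr rfl fun p' hp' => ?_
    rw [map_add, map_sub, map_sub, beta_gam_ne _ _ hne',
      beta_gam_ne' _ (Finset.ne_of_mem_erase hp'), beta_cst, beta_cst]
  have hRestfix : beta ℓ m d hb j p Rest = Rest := by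
    rw [hRest, map_prod]
    refine Finset.prod_congr rfl fun j' hj' => ?_
    have hj'j : j' ≠ j := Finset.ne_of_mem_erase hj'
    rw [map_prod]
    refine Finset.prod_congr rfl fun r _ => ?_
    rw [map_prod]
    refine Finset.prod_congr rfl fun p' _ => ?_
    rw [map_add, map_sub, map_sub, beta_gam_ne _ _ hne',
      beta_gam_ne _ _ hj'j, beta_cst, beta_cst]
  -- β slides Ffun
  have hslide : ∀ r : ℕ, beta ℓ m d hb j p (Ffun r) = Ffun (r + 1) := by
    intro r
    have hcf : cf ℓ a d hb i j (r + 1) = cf ℓ a d hb i j r + I * hb * (d j : ℂ) := by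
      rw [cf, cf]; push_cast; ring
    rw [hFfun]
    simp only
    rw [map_add, map_sub, map_sub, beta_gam_ne _ _ hne', beta_gam_self,
      beta_cst, beta_cst, hcf, cst_add]
    ring
  have hT : beta ℓ m d hb j p (∏ r ∈ range R, Ffun r) = ∏ r ∈ range R, Ffun (r + 1) := by
    rw [map_prod]
    exact Finset.prod_congr rfl fun r _ => hslide r
  have htel : Ffun 0 * ∏ r ∈ range R, Ffun (r + 1) = Ffun R * ∏ r ∈ range R, Ffun r := by
    rw [mul_comm (Ffun 0), ← Finset.prod_range_succ' Ffun R, Finset.prod_range_succ]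
    ring
  -- identify the boundary factors
  have hF0 : gam ℓ m i k - gam ℓ m j p + cst ℓ m (I * hb * (d i : ℂ))
      - cst ℓ m (I * hb * (d j : ℂ))
      - cst ℓ m ((I * hb / 2) * ((d i : ℂ) * (a i j : ℂ))) = Ffun 0 := by
    have h0 : cf ℓ a d hb i j 0
        = (I * hb / 2) * ((d i : ℂ) * (a i j : ℂ)) + I * hb * (d j : ℂ) := by
      rw [cf]; push_cast; ring
    rw [hFfun]
    simp only
    rw [h0, cst_add]
    ring
  have hFR : gam ℓ m i k - gam ℓ m j p + cst ℓ m (I * hb * (d i : ℂ))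
      - cst ℓ m (I * hb * (d j : ℂ))
      + cst ℓ m ((I * hb / 2) * ((d i : ℂ) * (a i j : ℂ))) = Ffun R := by
    have h1 : ((R : ℕ) : ℂ) = -((a j i : ℤ) : ℂ) := by
      have h2 : ((-(a j i)).toNat : ℤ) = -(a j i) :=
        Int.toNat_of_nonneg (neg_nonneg.mpr (ha' j i hne))
      rw [hR]
      exact_mod_cast congrArg (Int.cast : ℤ → ℂ) h2
    have h3 : (d i : ℂ) * (a i j : ℂ) = (d j : ℂ) * (a j i : ℂ) := by
      exact_mod_cast congrArg (Int.cast : ℤ → ℂ) (hsym i j)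
    have hRc : cf ℓ a d hb i j R
        = -((I * hb / 2) * ((d i : ℂ) * (a i j : ℂ))) + I * hb * (d j : ℂ) := by
      rw [cf, h1]
      linear_combination (I * hb) * h3
    rw [hFfun]
    simp only
    rw [hRc, cst_add, cst_neg]
    ring
  rw [hF0, hFR, hsplit, map_mul, beta_Rv d hb l ν k p hne', map_mul, hT, map_mul,
    hGfix, hRestfix]
  linear_combination (Rv ℓ m l ν i (gam ℓ m i k + cst ℓ m (I * hb * (d i : ℂ)))
    * (G * Rest)) * htel

end Tele
section Comp

variable {ℓ : ℕ} {m : Fin ℓ → ℕ} (a : Fin ℓ → Fin ℓ → ℤ) (d : Fin ℓ → ℕ) (hb : ℂ)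
  (l : Fin ℓ → ℕ) (ν : (i : Fin ℓ) → Fin (l i) → ℂ)

variable {i j : Fin ℓ}

lemma Fop_comp (hij : i ≠ j) (w w' : FF ℓ m) (f : FF ℓ m) :
    Fop ℓ m a d hb l ν i w (Fop ℓ m a d hb l ν j w' f)
      = ∑ k : Fin (m i), ∑ p : Fin (m j),
        (cst ℓ m (-((d i : ℂ) ^ (-(1/2 : ℂ)))) *
          (coefN a d hb l ν i k /
            ((w - gam ℓ m i k - cst ℓ m (I * hb * (d i : ℂ))) * denP i k))) *
        beta ℓ m d hb i k
          (cst ℓ m (-((d j : ℂ) ^ (-(1/2 : ℂ)))) *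
            (coefN a d hb l ν j p /
              ((w' - gam ℓ m j p - cst ℓ m (I * hb * (d j : ℂ))) * denP j p))) *
        beta ℓ m d hb i k (beta ℓ m d hb j p f) := by
  rw [Fop_apply a d hb l ν i w]
  refine Finset.sum_congr rfl fun k _ => ?_
  rw [Fop_apply a d hb l ν j w', map_sum, Finset.mul_sum]
  refine Finset.sum_congr rfl fun p _ => ?_
  rw [map_mul, ← mul_assoc]

lemma Fop_comp_rev (hij : i ≠ j) (w w' : FF ℓ m) (f : FF ℓ m) :
    Fop ℓ m a d hb l ν j w' (Fop ℓ m a d hb l ν i w f)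
      = ∑ k : Fin (m i), ∑ p : Fin (m j),
        (cst ℓ m (-((d j : ℂ) ^ (-(1/2 : ℂ)))) *
          (coefN a d hb l ν j p /
            ((w' - gam ℓ m j p - cst ℓ m (I * hb * (d j : ℂ))) * denP j p))) *
        beta ℓ m d hb j p
          (cst ℓ m (-((d i : ℂ) ^ (-(1/2 : ℂ)))) *
            (coefN a d hb l ν i k /
              ((w - gam ℓ m i k - cst ℓ m (I * hb * (d i : ℂ))) * denP i k))) *
        beta ℓ m d hb i k (beta ℓ m d hb j p f) := by
  rw [Fop_apply a d hb l ν j w']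
  rw [Finset.sum_comm]
  refine Finset.sum_congr rfl fun k _ => ?_
  rw [Fop_apply a d hb l ν i w, map_sum, Finset.mul_sum]
  refine Finset.sum_congr rfl fun p _ => ?_
  rw [map_mul, ← mul_assoc, beta_comm _ _ hij]

lemma F0op_comp (hij : i ≠ j) (w' : FF ℓ m) (f : FF ℓ m) :
    F0op ℓ m a d hb l ν i (Fop ℓ m a d hb l ν j w' f)
      = ∑ k : Fin (m i), ∑ p : Fin (m j),
        (cst ℓ m (-((d i : ℂ) ^ (-(1/2 : ℂ)))) *
          (coefN a d hb l ν i k / denP i k)) *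
        beta ℓ m d hb i k
          (cst ℓ m (-((d j : ℂ) ^ (-(1/2 : ℂ)))) *
            (coefN a d hb l ν j p /
              ((w' - gam ℓ m j p - cst ℓ m (I * hb * (d j : ℂ))) * denP j p))) *
        beta ℓ m d hb i k (beta ℓ m d hb j p f) := by
  rw [F0op_apply a d hb l ν i]
  refine Finset.sum_congr rfl fun k _ => ?_
  rw [Fop_apply a d hb l ν j w', map_sum, Finset.mul_sum]
  refine Finset.sum_congr rfl fun p _ => ?_
  rw [map_mul, ← mul_assoc]

lemma F0op_comp_rev (hij : i ≠ j) (w' : FF ℓ m) (f : FF ℓ m) :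
    Fop ℓ m a d hb l ν j w' (F0op ℓ m a d hb l ν i f)
      = ∑ k : Fin (m i), ∑ p : Fin (m j),
        (cst ℓ m (-((d j : ℂ) ^ (-(1/2 : ℂ)))) *
          (coefN a d hb l ν j p /
            ((w' - gam ℓ m j p - cst ℓ m (I * hb * (d j : ℂ))) * denP j p))) *
        beta ℓ m d hb j p
          (cst ℓ m (-((d i : ℂ) ^ (-(1/2 : ℂ)))) *
            (coefN a d hb l ν i k / denP i k)) *
        beta ℓ m d hb i k (beta ℓ m d hb j p f) := by
  rw [Fop_apply a d hb l ν j w']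
  rw [Finset.sum_comm]
  refine Finset.sum_congr rfl fun k _ => ?_
  rw [F0op_apply a d hb l ν i, map_sum, Finset.mul_sum]
  refine Finset.sum_congr rfl fun p _ => ?_
  rw [map_mul, ← mul_assoc, beta_comm _ _ hij]

end Comp
section PairKey

variable {ℓ : ℕ} {m : Fin ℓ → ℕ} (a : Fin ℓ → Fin ℓ → ℤ) (d : Fin ℓ → ℕ) (hb : ℂ)
  (l : Fin ℓ → ℕ) (ν : (i : Fin ℓ) → Fin (l i) → ℂ)

set_option maxHeartbeats 1600000 in
lemma pairKey {i j : Fin ℓ} (k : Fin (m i)) (p : Fin (m j))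
    (ha' : ∀ i j, i ≠ j → a i j ≤ 0)
    (hsym : ∀ i j, (d i : ℤ) * a i j = (d j : ℤ) * a j i)
    (hij : i ≠ j) :
    (spec ℓ m 0 - spec ℓ m 1) *
      ((cst ℓ m (-((d i : ℂ) ^ (-(1/2 : ℂ)))) *
          (coefN a d hb l ν i k /
            ((spec ℓ m 0 - gam ℓ m i k - cst ℓ m (I * hb * (d i : ℂ))) * denP i k))) *
        beta ℓ m d hb i k
          (cst ℓ m (-((d j : ℂ) ^ (-(1/2 : ℂ)))) *
            (coefN a d hb l ν j p /
              ((spec ℓ m 1 - gam ℓ m j p - cst ℓ m (I * hb * (d j : ℂ))) * denP j p)))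
      - (cst ℓ m (-((d j : ℂ) ^ (-(1/2 : ℂ)))) *
          (coefN a d hb l ν j p /
            ((spec ℓ m 1 - gam ℓ m j p - cst ℓ m (I * hb * (d j : ℂ))) * denP j p))) *
        beta ℓ m d hb j p
          (cst ℓ m (-((d i : ℂ) ^ (-(1/2 : ℂ)))) *
            (coefN a d hb l ν i k /
              ((spec ℓ m 0 - gam ℓ m i k - cst ℓ m (I * hb * (d i : ℂ))) * denP i k))))
    = cst ℓ m ((I * hb / 2) * ((d i : ℂ) * (a i j : ℂ))) *
      ((cst ℓ m (-((d i : ℂ) ^ (-(1/2 : ℂ)))) *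
          (coefN a d hb l ν i k /
            ((spec ℓ m 0 - gam ℓ m i k - cst ℓ m (I * hb * (d i : ℂ))) * denP i k))) *
        beta ℓ m d hb i k
          (cst ℓ m (-((d j : ℂ) ^ (-(1/2 : ℂ)))) *
            (coefN a d hb l ν j p /
              ((spec ℓ m 0 - gam ℓ m j p - cst ℓ m (I * hb * (d j : ℂ))) * denP j p)))
      - (cst ℓ m (-((d i : ℂ) ^ (-(1/2 : ℂ)))) *
          (coefN a d hb l ν i k /
            ((spec ℓ m 0 - gam ℓ m i k - cst ℓ m (I * hb * (d i : ℂ))) * denP i k))) *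
        beta ℓ m d hb i k
          (cst ℓ m (-((d j : ℂ) ^ (-(1/2 : ℂ)))) *
            (coefN a d hb l ν j p /
              ((spec ℓ m 1 - gam ℓ m j p - cst ℓ m (I * hb * (d j : ℂ))) * denP j p)))
      + ((cst ℓ m (-((d j : ℂ) ^ (-(1/2 : ℂ)))) *
          (coefN a d hb l ν j p /
            ((spec ℓ m 0 - gam ℓ m j p - cst ℓ m (I * hb * (d j : ℂ))) * denP j p))) *
        beta ℓ m d hb j p
          (cst ℓ m (-((d i : ℂ) ^ (-(1/2 : ℂ)))) *
            (coefN a d hb l ν i k /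
              ((spec ℓ m 0 - gam ℓ m i k - cst ℓ m (I * hb * (d i : ℂ))) * denP i k)))
      - (cst ℓ m (-((d j : ℂ) ^ (-(1/2 : ℂ)))) *
          (coefN a d hb l ν j p /
            ((spec ℓ m 1 - gam ℓ m j p - cst ℓ m (I * hb * (d j : ℂ))) * denP j p))) *
        beta ℓ m d hb j p
          (cst ℓ m (-((d i : ℂ) ^ (-(1/2 : ℂ)))) *
            (coefN a d hb l ν i k /
              ((spec ℓ m 0 - gam ℓ m i k - cst ℓ m (I * hb * (d i : ℂ))) * denP i k)))))
    - ((cst ℓ m (-((d i : ℂ) ^ (-(1/2 : ℂ)))) * (coefN a d hb l ν i k / denP i k)) *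
        beta ℓ m d hb i k
          (cst ℓ m (-((d j : ℂ) ^ (-(1/2 : ℂ)))) *
            (coefN a d hb l ν j p /
              ((spec ℓ m 0 - gam ℓ m j p - cst ℓ m (I * hb * (d j : ℂ))) * denP j p)))
      - (cst ℓ m (-((d i : ℂ) ^ (-(1/2 : ℂ)))) * (coefN a d hb l ν i k / denP i k)) *
        beta ℓ m d hb i k
          (cst ℓ m (-((d j : ℂ) ^ (-(1/2 : ℂ)))) *
            (coefN a d hb l ν j p /
              ((spec ℓ m 1 - gam ℓ m j p - cst ℓ m (I * hb * (d j : ℂ))) * denP j p)))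
      - ((cst ℓ m (-((d j : ℂ) ^ (-(1/2 : ℂ)))) *
          (coefN a d hb l ν j p /
            ((spec ℓ m 0 - gam ℓ m j p - cst ℓ m (I * hb * (d j : ℂ))) * denP j p))) *
        beta ℓ m d hb j p
          (cst ℓ m (-((d i : ℂ) ^ (-(1/2 : ℂ)))) * (coefN a d hb l ν i k / denP i k))
      - (cst ℓ m (-((d j : ℂ) ^ (-(1/2 : ℂ)))) *
          (coefN a d hb l ν j p /
            ((spec ℓ m 1 - gam ℓ m j p - cst ℓ m (I * hb * (d j : ℂ))) * denP j p))) *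
        beta ℓ m d hb j p
          (cst ℓ m (-((d i : ℂ) ^ (-(1/2 : ℂ)))) * (coefN a d hb l ν i k / denP i k)))) := by
  have hji : j ≠ i := Ne.symm hij
  -- beta computations on coefficients
  have hB' : ∀ t : Fin 2,
      beta ℓ m d hb i k
        (cst ℓ m (-((d j : ℂ) ^ (-(1/2 : ℂ)))) *
          (coefN a d hb l ν j p /
            ((spec ℓ m t - gam ℓ m j p - cst ℓ m (I * hb * (d j : ℂ))) * denP j p)))
      = cst ℓ m (-((d j : ℂ) ^ (-(1/2 : ℂ)))) *
          (beta ℓ m d hb i k (coefN a d hb l ν j p) /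
            ((spec ℓ m t - gam ℓ m j p - cst ℓ m (I * hb * (d j : ℂ))) * denP j p)) := by
    intro t
    rw [map_mul, beta_cst, map_div₀, map_mul, map_sub, map_sub, beta_spec,
      beta_gam_ne _ _ hji, beta_cst, beta_denP _ _ _ _ hji]
  have hA' : ∀ t : Fin 2,
      beta ℓ m d hb j p
        (cst ℓ m (-((d i : ℂ) ^ (-(1/2 : ℂ)))) *
          (coefN a d hb l ν i k /
            ((spec ℓ m t - gam ℓ m i k - cst ℓ m (I * hb * (d i : ℂ))) * denP i k)))
      = cst ℓ m (-((d i : ℂ) ^ (-(1/2 : ℂ)))) *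
          (beta ℓ m d hb j p (coefN a d hb l ν i k) /
            ((spec ℓ m t - gam ℓ m i k - cst ℓ m (I * hb * (d i : ℂ))) * denP i k)) := by
    intro t
    rw [map_mul, beta_cst, map_div₀, map_mul, map_sub, map_sub, beta_spec,
      beta_gam_ne _ _ hij, beta_cst, beta_denP _ _ _ _ hij]
  have hA0' :
      beta ℓ m d hb j p
        (cst ℓ m (-((d i : ℂ) ^ (-(1/2 : ℂ)))) * (coefN a d hb l ν i k / denP i k))
      = cst ℓ m (-((d i : ℂ) ^ (-(1/2 : ℂ)))) *
          (beta ℓ m d hb j p (coefN a d hb l ν i k) / denP i k) := by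
    rw [map_mul, beta_cst, map_div₀, beta_denP _ _ _ _ hij]
  rw [hB' 0, hB' 1, hA' 0, hA0']
  simp only [← div_div]
  -- nonzero denominators
  have hux : spec ℓ m 0 - gam ℓ m i k - cst ℓ m (I * hb * (d i : ℂ)) ≠ 0 := by
    rw [spec, gam]; exact sub_cst_ne (by simp) _
  have huy : spec ℓ m 0 - gam ℓ m j p - cst ℓ m (I * hb * (d j : ℂ)) ≠ 0 := by
    rw [spec, gam]; exact sub_cst_ne (by simp) _
  have hvy : spec ℓ m 1 - gam ℓ m j p - cst ℓ m (I * hb * (d j : ℂ)) ≠ 0 := by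
    rw [spec, gam]; exact sub_cst_ne (by simp) _
  have hκ : (I * hb / 2) * ((d j : ℂ) * (a j i : ℂ))
      = (I * hb / 2) * ((d i : ℂ) * (a i j : ℂ)) := by
    have h3 : (d i : ℂ) * (a i j : ℂ) = (d j : ℂ) * (a j i : ℂ) := by
      exact_mod_cast congrArg (Int.cast : ℤ → ℂ) (hsym i j)
    rw [h3]
  rcases lt_or_gt_of_ne hij with hlt | hlt
  · -- i < j : β_{j,p} fixes coefN i k, β_{i,k} telescopes coefN j p
    have hfixA : beta ℓ m d hb j p (coefN a d hb l ν i k) = coefN a d hb l ν i k :=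
      beta_coefN_fix a d hb l ν k p hji (by exact fun h => absurd hlt (lt_asymm h))
    have htele := beta_coefN_tele a d hb l ν p k ha' hsym hlt
    rw [hκ] at htele
    rw [hfixA]
    have hcore := key1core (spec ℓ m 0) (spec ℓ m 1) (gam ℓ m i k) (gam ℓ m j p)
      (cst ℓ m (I * hb * (d i : ℂ))) (cst ℓ m (I * hb * (d j : ℂ)))
      (cst ℓ m ((I * hb / 2) * ((d i : ℂ) * (a i j : ℂ))))
      (coefN a d hb l ν i k) (coefN a d hb l ν j p)
      (beta ℓ m d hb i k (coefN a d hb l ν j p)) htele hux huy hvy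
    linear_combination (cst ℓ m (-((d i : ℂ) ^ (-(1/2 : ℂ)))) *
      cst ℓ m (-((d j : ℂ) ^ (-(1/2 : ℂ)))) / (denP i k * denP j p)) * hcore
  · -- j < i : β_{i,k} fixes coefN j p, β_{j,p} telescopes coefN i k
    have hfixB : beta ℓ m d hb i k (coefN a d hb l ν j p) = coefN a d hb l ν j p :=
      beta_coefN_fix a d hb l ν p k hij (by exact fun h => absurd hlt (lt_asymm h))
    have htele := beta_coefN_tele a d hb l ν k p ha' hsym hlt
    rw [hfixB]
    have h1 : (gam ℓ m j p - gam ℓ m i k + cst ℓ m (I * hb * (d j : ℂ))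
          - cst ℓ m (I * hb * (d i : ℂ))
          + cst ℓ m ((I * hb / 2) * ((d i : ℂ) * (a i j : ℂ))))
        * beta ℓ m d hb j p (coefN a d hb l ν i k)
        = (gam ℓ m j p - gam ℓ m i k + cst ℓ m (I * hb * (d j : ℂ))
          - cst ℓ m (I * hb * (d i : ℂ))
          - cst ℓ m ((I * hb / 2) * ((d i : ℂ) * (a i j : ℂ))))
        * coefN a d hb l ν i k := by linear_combination -htele
    have hcore := key2core (spec ℓ m 0) (spec ℓ m 1) (gam ℓ m i k) (gam ℓ m j p)
      (cst ℓ m (I * hb * (d i : ℂ))) (cst ℓ m (I * hb * (d j : ℂ)))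
      (cst ℓ m ((I * hb / 2) * ((d i : ℂ) * (a i j : ℂ))))
      (coefN a d hb l ν i k) (beta ℓ m d hb j p (coefN a d hb l ν i k))
      (coefN a d hb l ν j p) h1 hux huy hvy
    linear_combination (cst ℓ m (-((d i : ℂ) ^ (-(1/2 : ℂ)))) *
      cst ℓ m (-((d j : ℂ) ^ (-(1/2 : ℂ)))) / (denP i k * denP j p)) * hcore

end PairKey
set_option maxHeartbeats 3200000 in
/-- the Yangian mixed lowering relation. -/
theorem yangian_FF_mixed
    (ℓ : ℕ) (hl : 1 ≤ ℓ)
    (a : Fin ℓ → Fin ℓ → ℤ) (ha : ∀ i, a i i = 2) (ha' : ∀ i j, i ≠ j → a i j ≤ 0)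
    (d : Fin ℓ → ℕ) (hd : ∀ i, 0 < d i)
    (hsym : ∀ i j, (d i : ℤ) * a i j = (d j : ℤ) * a j i)
    (hb : ℂ) (m : Fin ℓ → ℕ) (hm : ∀ i, 0 < m i)
    (l : Fin ℓ → ℕ) (hln : ∀ i, (l i : ℤ) = ∑ j, (m j : ℤ) * a j i)
    (ν : (i : Fin ℓ) → Fin (l i) → ℂ)
    (i j : Fin ℓ) (hij : i ≠ j) :
    (spec ℓ m 0 - spec ℓ m 1) •
        (Fop ℓ m a d hb l ν i (spec ℓ m 0) ∘ Fop ℓ m a d hb l ν j (spec ℓ m 1)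
          - Fop ℓ m a d hb l ν j (spec ℓ m 1) ∘ Fop ℓ m a d hb l ν i (spec ℓ m 0))
      = cst ℓ m ((I * hb / 2) * ((d i : ℂ) * (a i j : ℂ))) •
          (Fop ℓ m a d hb l ν i (spec ℓ m 0) ∘
              (Fop ℓ m a d hb l ν j (spec ℓ m 0) - Fop ℓ m a d hb l ν j (spec ℓ m 1))
            + (Fop ℓ m a d hb l ν j (spec ℓ m 0) - Fop ℓ m a d hb l ν j (spec ℓ m 1)) ∘
              Fop ℓ m a d hb l ν i (spec ℓ m 0))
        - (F0op ℓ m a d hb l ν i ∘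
              (Fop ℓ m a d hb l ν j (spec ℓ m 0) - Fop ℓ m a d hb l ν j (spec ℓ m 1))
            - (Fop ℓ m a d hb l ν j (spec ℓ m 0) - Fop ℓ m a d hb l ν j (spec ℓ m 1)) ∘
              F0op ℓ m a d hb l ν i) := by
  funext f
  simp only [Pi.smul_apply, Pi.sub_apply, Pi.add_apply, Function.comp_apply, smul_eq_mul]
  rw [Fop_sub a d hb l ν i (spec ℓ m 0) (Fop ℓ m a d hb l ν j (spec ℓ m 0) f)
      (Fop ℓ m a d hb l ν j (spec ℓ m 1) f),
    F0op_sub a d hb l ν i (Fop ℓ m a d hb l ν j (spec ℓ m 0) f)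
      (Fop ℓ m a d hb l ν j (spec ℓ m 1) f),
    Fop_comp a d hb l ν hij (spec ℓ m 0) (spec ℓ m 1) f,
    Fop_comp_rev a d hb l ν hij (spec ℓ m 0) (spec ℓ m 1) f,
    Fop_comp a d hb l ν hij (spec ℓ m 0) (spec ℓ m 0) f,
    Fop_comp_rev a d hb l ν hij (spec ℓ m 0) (spec ℓ m 0) f,
    F0op_comp a d hb l ν hij (spec ℓ m 0) f,
    F0op_comp a d hb l ν hij (spec ℓ m 1) f,
    F0op_comp_rev a d hb l ν hij (spec ℓ m 0) f,
    F0op_comp_rev a d hb l ν hij (spec ℓ m 1) f]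
  simp only [← Finset.sum_sub_distrib, ← Finset.sum_add_distrib, Finset.mul_sum]
  refine Finset.sum_congr rfl fun k _ => Finset.sum_congr rfl fun p _ => ?_
  linear_combination (beta ℓ m d hb i k (beta ℓ m d hb j p f)) *
    pairKey a d hb l ν k p ha' hsym hij
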